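/- If (X,f) has limit shadowing, then the induced system (F_2(X), f_2) on the 2-fold symmetric product has limit shadowing. -/

import Mathlib

open Filter Topology TopologicalSpace Metric

/-- The induced map on the hyperspace of nonempty compact subsets. -/
def hyperMap {X : Type*} [MetricSpace X] (f : X → X) (hf : Continuous f) :
    NonemptyCompacts X → NonemptyCompacts X :=
  fun A => ⟨⟨f '' A, A.isCompact.image hf⟩, A.nonempty.image f⟩

/-- A member of the 2-fold symmetric product `F₂(X)`. -/
def IsF2 {X : Type*} [MetricSpace X] (A : NonemptyCompacts X) : Prop :=
  ∃ a b : X, (A : Set X) = {a, b}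

lemma hyperMap_iterate_coe {X : Type*} [MetricSpace X] (f : X → X) (hf : Continuous f)
    (i : ℕ) (A : NonemptyCompacts X) :
    (((hyperMap f hf)^[i] A : Set X)) = f^[i] '' A := by
  induction i with
  | zero => simp
  | succ n ih =>
    rw [Function.iterate_succ_apply']
    show f '' ((hyperMap f hf)^[n] A : Set X) = _
    rw [ih, ← Set.image_comp, ← Function.iterate_succ']

lemma hausdorffDist_pair_le {X : Type*} [MetricSpace X] (x y u v : X) :
    hausdorffDist ({x, y} : Set X) {u, v} ≤ max (dist x u) (dist y v) := by
  apply hausdorffDist_le_of_mem_dist (le_max_of_le_left dist_nonneg)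
  · intro p hp
    rcases hp with rfl | rfl
    · exact ⟨u, Set.mem_insert _ _, le_max_left _ _⟩
    · exact ⟨v, Set.mem_insert_of_mem _ rfl, le_max_right _ _⟩
  · intro p hp
    rcases hp with rfl | rfl
    · exact ⟨x, Set.mem_insert _ _, by rw [dist_comm]; exact le_max_left _ _⟩
    · exact ⟨y, Set.mem_insert_of_mem _ rfl, by rw [dist_comm]; exact le_max_right _ _⟩

/-- limit shadowing of (X, f) implies limit shadowing of the induced
system on the 2-fold symmetric product F₂(X). -/
theorem limitShadowing_F2_of_limitShadowing
    {X : Type*} [MetricSpace X] [CompactSpace X]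
    (f : X → X) (hf : Continuous f)
    (hsh : ∀ x : ℕ → X,
      Tendsto (fun i => dist (f (x i)) (x (i + 1))) atTop (nhds 0) →
      ∃ z : X, Tendsto (fun i => dist (f^[i] z) (x i)) atTop (nhds 0)) :
    ∀ A : ℕ → NonemptyCompacts X, (∀ i, IsF2 (A i)) →
      Tendsto (fun i => dist (hyperMap f hf (A i)) (A (i + 1))) atTop (nhds 0) →
      ∃ B : NonemptyCompacts X, IsF2 B ∧
        Tendsto (fun i => dist ((hyperMap f hf)^[i] B) (A i)) atTop (nhds 0) := by
  intro A hA2 hA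
  set ε : ℕ → ℝ := fun i => dist (hyperMap f hf (A i)) (A (i + 1)) with hε
  -- matching step
  have key : ∀ i (p : X × X), (A i : Set X) = {p.1, p.2} →
      ∃ q : X × X, (A (i+1) : Set X) = {q.1, q.2} ∧
        dist (f p.1) q.1 ≤ ε i ∧ dist (f p.2) q.2 ≤ ε i := by
    intro i ⟨a, b⟩ hab
    obtain ⟨u, v, huv⟩ := hA2 (i+1)
    have hne : EMetric.hausdorffEdist ((hyperMap f hf (A i) : Set X)) ((A (i+1) : Set X)) ≠ ⊤ :=
      hausdorffEdist_ne_top_of_nonempty_of_bounded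
        ((A i).nonempty.image f) (A (i+1)).nonempty
        ((A i).isCompact.image hf).isBounded (A (i+1)).isCompact.isBounded
    have himg : (hyperMap f hf (A i) : Set X) = {f a, f b} := by
      show f '' (A i : Set X) = _
      rw [hab, Set.image_pair]
    have hεeq : ε i = hausdorffDist ((hyperMap f hf (A i) : Set X)) ((A (i+1) : Set X)) :=
      NonemptyCompacts.dist_eq
    -- four conditions
    have cond1 : ∀ x ∈ ({f a, f b} : Set X), dist x u ≤ ε i ∨ dist x v ≤ ε i := by
      intro x hx
      have h1 : infDist x ((A (i+1) : Set X)) ≤ ε i := by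
        rw [hεeq]
        exact infDist_le_hausdorffDist_of_mem (himg ▸ hx) hne
      obtain ⟨y, hy, hyd⟩ := (A (i+1)).isCompact.exists_infDist_eq_dist (A (i+1)).nonempty x
      rw [huv] at hy
      rcases hy with rfl | rfl
      · exact Or.inl (hyd ▸ h1)
      · exact Or.inr (hyd ▸ h1)
    have cond2 : ∀ y ∈ ({u, v} : Set X), dist (f a) y ≤ ε i ∨ dist (f b) y ≤ ε i := by
      intro y hy
      have h1 : infDist y ((hyperMap f hf (A i) : Set X)) ≤ ε i := by
        rw [hεeq, hausdorffDist_comm]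
        exact infDist_le_hausdorffDist_of_mem (huv ▸ hy) (by rw [hausdorffEDist_comm]; exact hne)
      obtain ⟨x, hx, hxd⟩ := ((A i).isCompact.image hf).exists_infDist_eq_dist
        ((A i).nonempty.image f) y
      rw [show (f '' (A i : Set X)) = {f a, f b} from himg] at hx
      rcases hx with rfl | rfl
      · exact Or.inl (by rw [dist_comm]; exact hxd ▸ h1)
      · exact Or.inr (by rw [dist_comm]; exact hxd ▸ h1)
    have h1 := cond1 (f a) (Set.mem_insert _ _)
    have h2 := cond1 (f b) (Set.mem_insert_of_mem _ rfl)
    have h3 := cond2 u (Set.mem_insert _ _)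
    have h4 := cond2 v (Set.mem_insert_of_mem _ rfl)
    have : (dist (f a) u ≤ ε i ∧ dist (f b) v ≤ ε i) ∨
        (dist (f a) v ≤ ε i ∧ dist (f b) u ≤ ε i) := by tauto
    rcases this with ⟨h5, h6⟩ | ⟨h5, h6⟩
    · exact ⟨(u, v), huv, h5, h6⟩
    · exact ⟨(v, u), by rw [huv, Set.pair_comm], h5, h6⟩
  choose step hstep1 hstep2 hstep3 using key
  obtain ⟨a0, b0, h0⟩ := hA2 0
  -- recursive sequence of labeled pairs
  let F : (i : ℕ) → {p : X × X // (A i : Set X) = {p.1, p.2}} := fun i =>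
    Nat.rec ⟨(a0, b0), h0⟩ (fun n prev => ⟨step n prev.1 prev.2, hstep1 n prev.1 prev.2⟩) i
  set c : ℕ → X × X := fun i => (F i).1 with hc
  have hrepr : ∀ i, (A i : Set X) = {(c i).1, (c i).2} := fun i => (F i).2
  have hchain1 : ∀ i, dist (f (c i).1) ((c (i+1)).1) ≤ ε i := fun i =>
    hstep2 i (c i) (F i).2
  have hchain2 : ∀ i, dist (f (c i).2) ((c (i+1)).2) ≤ ε i := fun i =>
    hstep3 i (c i) (F i).2
  have hε0 : Tendsto ε atTop (nhds 0) := hA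
  have hpo1 : Tendsto (fun i => dist (f ((fun i => (c i).1) i)) ((fun i => (c i).1) (i+1)))
      atTop (nhds 0) :=
    squeeze_zero (fun i => dist_nonneg) hchain1 hε0
  have hpo2 : Tendsto (fun i => dist (f ((fun i => (c i).2) i)) ((fun i => (c i).2) (i+1)))
      atTop (nhds 0) :=
    squeeze_zero (fun i => dist_nonneg) hchain2 hε0
  obtain ⟨z, hz⟩ := hsh _ hpo1
  obtain ⟨w, hw⟩ := hsh _ hpo2
  set B : NonemptyCompacts X := ⟨⟨{z, w}, (Set.toFinite _).isCompact⟩,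
    ⟨z, Set.mem_insert _ _⟩⟩ with hB
  have hcoe : (B : Set X) = {z, w} := rfl
  refine ⟨B, ⟨z, w, hcoe⟩, ?_⟩
  have hbound : ∀ i, dist ((hyperMap f hf)^[i] B) (A i)
      ≤ max (dist (f^[i] z) ((c i).1)) (dist (f^[i] w) ((c i).2)) := by
    intro i
    rw [NonemptyCompacts.dist_eq, hyperMap_iterate_coe, hcoe, Set.image_pair, hrepr i]
    exact hausdorffDist_pair_le _ _ _ _
  have hmax : Tendsto (fun i => max (dist (f^[i] z) ((c i).1)) (dist (f^[i] w) ((c i).2)))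
      atTop (nhds 0) := by
    have := hz.max hw
    simpa using this
  exact squeeze_zero (fun i => dist_nonneg) hbound hmax
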